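/- Let q be an even positive integer and let G be a C₄-free simple graph on q²+q vertices whose maximum degree is at most q+1. Then the number e of edges of G satisfies e ≤ (1/2)·q·(q+1)² − q. -/

import Mathlib

open Finset

lemma even_card_of_invol {α : Type*} [DecidableEq α] (s : Finset α) (i : α → α)
    (hmem : ∀ a ∈ s, i a ∈ s) (hinv : ∀ a ∈ s, i (i a) = a) (hne : ∀ a ∈ s, i a ≠ a) :
    Even s.card := by
  classical
  induction s using Finset.strongInduction with
  | _ s ih =>
    rcases s.eq_empty_or_nonempty with rfl | ⟨a, ha⟩
    · simp
    · have hia : i a ∈ s := hmem a ha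
      have hane : i a ≠ a := hne a ha
      set s' := s \ {a, i a} with hs'
      have h2 : ({a, i a} : Finset α) ⊆ s := by
        intro x hx
        simp only [Finset.mem_insert, Finset.mem_singleton] at hx
        rcases hx with rfl | rfl <;> assumption
      have hsub : s' ⊂ s := Finset.sdiff_ssubset h2 ⟨a, by simp⟩
      have hmem' : ∀ b ∈ s', i b ∈ s' := by
        intro b hb
        rw [hs', Finset.mem_sdiff] at hb ⊢
        obtain ⟨hbs, hbn⟩ := hb
        simp only [Finset.mem_insert, Finset.mem_singleton] at hbn
        push_neg at hbn
        refine ⟨hmem b hbs, ?_⟩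
        simp only [Finset.mem_insert, Finset.mem_singleton]
        push_neg
        constructor
        · intro h; exact hbn.2 (by rw [← hinv b hbs, h])
        · intro h; exact hbn.1 (by rw [← hinv b hbs, h, hinv a ha])
      have hinv' : ∀ b ∈ s', i (i b) = b := fun b hb => hinv b (Finset.mem_sdiff.mp hb).1
      have hne' : ∀ b ∈ s', i b ≠ b := fun b hb => hne b (Finset.mem_sdiff.mp hb).1
      have hcard : s.card = s'.card + 2 := by
        have hc2 : ({a, i a} : Finset α).card = 2 := by
          rw [Finset.card_insert_of_notMem (by simp [Ne.symm hane]), Finset.card_singleton]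
        have hsd : s'.card = s.card - 2 := by rw [hs', Finset.card_sdiff_of_subset h2, hc2]
        have hle := Finset.card_le_card h2
        rw [hc2] at hle
        omega
      obtain ⟨c, hc⟩ := ih s' hsub hmem' hinv' hne'
      rw [hcard]
      exact ⟨c + 1, by omega⟩

/-- A simple graph is `C₄`-free iff no two distinct vertices have two or more
common neighbors. -/
def C4Free {V : Type*} (G : SimpleGraph V) : Prop :=
  ∀ u v : V, u ≠ v → {w : V | G.Adj u w ∧ G.Adj v w}.Subsingleton

lemma C4Free.uniq {V : Type*} {G : SimpleGraph V} (hG : C4Free G) {x y : V} (hxy : x ≠ y)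
    {a b : V} (h1 : G.Adj x a) (h2 : G.Adj y a) (h3 : G.Adj x b) (h4 : G.Adj y b) : a = b :=
  hG x y hxy ⟨h1, h2⟩ ⟨h3, h4⟩

/-- Key lemma: every vertex of full degree `q+1` sees total deficiency at least `2`
in its neighborhood. -/
lemma key_deficiency (q : ℕ) (hq2 : 2 ≤ q) (hqe : Even q)
    (G : SimpleGraph (Fin (q ^ 2 + q))) [DecidableRel G.Adj] (hG : C4Free G)
    (hΔ : ∀ v, G.degree v ≤ q + 1) (v : Fin (q ^ 2 + q)) (hv : G.degree v = q + 1) :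
    2 ≤ ∑ u ∈ G.neighborFinset v, (q + 1 - G.degree u) := by
  classical
  set S := G.neighborFinset v with hS
  have hScard : S.card = q + 1 := by rw [hS, G.card_neighborFinset_eq_degree, hv]
  have hvS : v ∉ S := by simp [hS]
  have hmemS : ∀ u, u ∈ S ↔ G.Adj v u := by intro u; simp [hS]
  -- decomposition of each neighbor's degree
  have hdecomp : ∀ u ∈ S, G.degree u =
      (G.neighborFinset u ∩ {v}).card + (G.neighborFinset u ∩ S).card
        + (G.neighborFinset u \ insert v S).card := by
    intro u hu
    have h1 : (G.neighborFinset u ∩ insert v S).card + (G.neighborFinset u \ insert v S).card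
        = G.degree u := by
      rw [Finset.card_inter_add_card_sdiff, G.card_neighborFinset_eq_degree]
    have h2 : G.neighborFinset u ∩ insert v S
        = (G.neighborFinset u ∩ {v}) ∪ (G.neighborFinset u ∩ S) := by
      rw [Finset.insert_eq, Finset.inter_union_distrib_left]
    have h3 : Disjoint (G.neighborFinset u ∩ {v}) (G.neighborFinset u ∩ S) := by
      apply Finset.disjoint_left.mpr
      intro x hx1 hx2
      have := Finset.mem_singleton.mp (Finset.mem_of_mem_inter_right hx1)
      subst this
      exact hvS (Finset.mem_of_mem_inter_right hx2)
    rw [h2, Finset.card_union_of_disjoint h3] at h1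
    omega
  -- first part: sum of |N(u) ∩ {v}| = q+1
  have hsum1 : ∑ u ∈ S, (G.neighborFinset u ∩ {v}).card = q + 1 := by
    have : ∀ u ∈ S, (G.neighborFinset u ∩ {v}).card = 1 := by
      intro u hu
      have hadj : G.Adj v u := (hmemS u).mp hu
      have : G.neighborFinset u ∩ {v} = {v} := by
        ext w
        simp only [Finset.mem_inter, Finset.mem_singleton, SimpleGraph.mem_neighborFinset]
        constructor
        · rintro ⟨-, rfl⟩; rfl
        · rintro rfl; exact ⟨hadj.symm, rfl⟩
      rw [this, Finset.card_singleton]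
    rw [Finset.sum_congr rfl this, Finset.sum_const, smul_eq_mul, mul_one, hScard]
  -- second part: sum of |N(u) ∩ S| is even and ≤ q+1, hence ≤ q
  have hsub : ∀ w, w ∈ S → ∀ a b, a ∈ G.neighborFinset w ∩ S → b ∈ G.neighborFinset w ∩ S →
      a = b := by
    intro w hw a b ha hb
    have hwv : w ≠ v := fun h => hvS (h ▸ hw)
    obtain ⟨ha1, ha2⟩ := Finset.mem_inter.mp ha
    obtain ⟨hb1, hb2⟩ := Finset.mem_inter.mp hb
    exact hG.uniq hwv (SimpleGraph.mem_neighborFinset G w a |>.mp ha1)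
      ((hmemS a).mp ha2) ((SimpleGraph.mem_neighborFinset G w b).mp hb1) ((hmemS b).mp hb2)
  have hsum2 : ∑ u ∈ S, (G.neighborFinset u ∩ S).card ≤ q := by
    set B := S.filter (fun u => (G.neighborFinset u ∩ S).Nonempty) with hB
    have hcard01 : ∀ u ∈ S, (G.neighborFinset u ∩ S).card ≤ 1 := by
      intro u hu
      exact Finset.card_le_one.mpr (fun a ha b hb => hsub u hu a b ha hb)
    have hsumB : ∑ u ∈ S, (G.neighborFinset u ∩ S).card = B.card := by
      rw [← Finset.sum_filter_add_sum_filter_not S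
        (fun u => (G.neighborFinset u ∩ S).Nonempty)]
      have hz : ∑ u ∈ S.filter (fun u => ¬(G.neighborFinset u ∩ S).Nonempty),
          (G.neighborFinset u ∩ S).card = 0 := by
        apply Finset.sum_eq_zero
        intro u hu
        have := (Finset.mem_filter.mp hu).2
        rw [Finset.not_nonempty_iff_eq_empty] at this
        rw [this, Finset.card_empty]
      have ho : ∑ u ∈ B, (G.neighborFinset u ∩ S).card = B.card := by
        have h1 : ∀ u ∈ B, (G.neighborFinset u ∩ S).card = 1 := by
          intro u hu
          obtain ⟨huS, hne⟩ := Finset.mem_filter.mp hu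
          have := Finset.card_pos.mpr hne
          have := hcard01 u huS
          omega
        rw [Finset.sum_congr rfl h1, Finset.sum_const, smul_eq_mul, mul_one]
      rw [ho, hz]
      omega
    -- B has even cardinality via a fixed-point-free involution
    have hBeven : Even B.card := by
      set i : Fin (q ^ 2 + q) → Fin (q ^ 2 + q) :=
        fun u => if h : (G.neighborFinset u ∩ S).Nonempty then h.choose else u with hi
      have hiB : ∀ u ∈ B, i u ∈ G.neighborFinset u ∩ S := by
        intro u hu
        obtain ⟨huS, hne⟩ := Finset.mem_filter.mp hu
        rw [hi]
        simp only [dif_pos hne]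
        exact hne.choose_spec
      apply even_card_of_invol B i
      · intro u hu
        have hiu := hiB u hu
        obtain ⟨hi1, hi2⟩ := Finset.mem_inter.mp hiu
        have hadj : G.Adj u (i u) := (SimpleGraph.mem_neighborFinset G u (i u)).mp hi1
        refine Finset.mem_filter.mpr ⟨hi2, ⟨u, ?_⟩⟩
        exact Finset.mem_inter.mpr ⟨(SimpleGraph.mem_neighborFinset G (i u) u).mpr hadj.symm,
          (Finset.mem_filter.mp hu).1⟩
      · intro u hu
        have hiu := hiB u hu
        obtain ⟨hi1, hi2⟩ := Finset.mem_inter.mp hiu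
        have hadj : G.Adj u (i u) := (SimpleGraph.mem_neighborFinset G u (i u)).mp hi1
        have huB2 : i u ∈ B := by
          refine Finset.mem_filter.mpr ⟨hi2, ⟨u, ?_⟩⟩
          exact Finset.mem_inter.mpr ⟨(SimpleGraph.mem_neighborFinset G (i u) u).mpr hadj.symm,
            (Finset.mem_filter.mp hu).1⟩
        have hiiu := hiB (i u) huB2
        refine hsub (i u) hi2 _ u hiiu ?_
        exact Finset.mem_inter.mpr ⟨(SimpleGraph.mem_neighborFinset G (i u) u).mpr hadj.symm,
          (Finset.mem_filter.mp hu).1⟩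
      · intro u hu
        have hiu := hiB u hu
        obtain ⟨hi1, _⟩ := Finset.mem_inter.mp hiu
        have hadj : G.Adj u (i u) := (SimpleGraph.mem_neighborFinset G u (i u)).mp hi1
        intro h
        rw [h] at hadj
        exact G.loopless.irrefl u hadj
    have hBle : B.card ≤ q + 1 := by
      calc B.card ≤ S.card := Finset.card_le_card (Finset.filter_subset _ _)
        _ = q + 1 := hScard
    obtain ⟨m, hm⟩ := hqe
    obtain ⟨c, hc⟩ := hBeven
    omega
  -- third part: the sets N(u) \ ({v} ∪ S) for u ∈ S are pairwise disjoint
  have hsum3 : ∑ u ∈ S, (G.neighborFinset u \ insert v S).card ≤ (q ^ 2 + q) - (q + 2) := by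
    have hdisj : (S : Set (Fin (q ^ 2 + q))).PairwiseDisjoint
        (fun u => G.neighborFinset u \ insert v S) := by
      intro a ha b hb hab
      apply Finset.disjoint_left.mpr
      intro w hw1 hw2
      obtain ⟨hw1n, hw1i⟩ := Finset.mem_sdiff.mp hw1
      obtain ⟨hw2n, _⟩ := Finset.mem_sdiff.mp hw2
      have hwv : w ≠ v := fun h => hw1i (h ▸ Finset.mem_insert_self v S)
      apply hab
      exact hG.uniq hwv ((SimpleGraph.mem_neighborFinset G a w).mp hw1n).symm
        ((hmemS a).mp ha) ((SimpleGraph.mem_neighborFinset G b w).mp hw2n).symm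
        ((hmemS b).mp hb)
    rw [← Finset.card_biUnion hdisj]
    have hsubu : S.biUnion (fun u => G.neighborFinset u \ insert v S)
        ⊆ Finset.univ \ insert v S := by
      intro w hw
      obtain ⟨u, _, hwu⟩ := Finset.mem_biUnion.mp hw
      exact Finset.mem_sdiff.mpr ⟨Finset.mem_univ w, (Finset.mem_sdiff.mp hwu).2⟩
    calc (S.biUnion (fun u => G.neighborFinset u \ insert v S)).card
        ≤ (Finset.univ \ insert v S).card := Finset.card_le_card hsubu
      _ = (q ^ 2 + q) - (q + 2) := by
          rw [Finset.card_sdiff_of_subset (Finset.subset_univ _), Finset.card_insert_of_notMem hvS,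
            hScard]
          simp
  -- combine: total degree of the neighborhood is at most (q+1)^2 - 2
  have hdegsum : ∑ u ∈ S, G.degree u ≤ (q + 1) + q + ((q ^ 2 + q) - (q + 2)) := by
    calc ∑ u ∈ S, G.degree u
        = ∑ u ∈ S, ((G.neighborFinset u ∩ {v}).card + (G.neighborFinset u ∩ S).card
            + (G.neighborFinset u \ insert v S).card) := Finset.sum_congr rfl hdecomp
      _ = (∑ u ∈ S, (G.neighborFinset u ∩ {v}).card)
            + (∑ u ∈ S, (G.neighborFinset u ∩ S).card)
            + ∑ u ∈ S, (G.neighborFinset u \ insert v S).card := by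
          rw [Finset.sum_add_distrib, Finset.sum_add_distrib]
      _ ≤ (q + 1) + q + ((q ^ 2 + q) - (q + 2)) := by
          rw [hsum1]
          exact Nat.add_le_add (Nat.add_le_add le_rfl hsum2) hsum3
  -- conclude
  have htotal : ∑ u ∈ S, (q + 1 - G.degree u) + ∑ u ∈ S, G.degree u = (q + 1) * (q + 1) := by
    rw [← Finset.sum_add_distrib]
    have : ∀ u ∈ S, (q + 1 - G.degree u) + G.degree u = q + 1 := by
      intro u _
      exact Nat.sub_add_cancel (hΔ u)
    rw [Finset.sum_congr rfl this, Finset.sum_const, smul_eq_mul, hScard]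
  have hq22 : q + 2 ≤ q ^ 2 + q := by nlinarith
  have hkey : ((q ^ 2 + q) - (q + 2)) + (q + 2) = q ^ 2 + q := Nat.sub_add_cancel hq22
  have hexp : (q + 1) * (q + 1) = q ^ 2 + 2 * q + 1 := by ring
  have hq2' : 2 ≤ q ^ 2 := by nlinarith
  -- linear arithmetic (q^2 as an atom)
  set t := (q ^ 2 + q) - (q + 2) with ht
  set A := ∑ u ∈ S, (q + 1 - G.degree u) with hA
  set Bsum := ∑ u ∈ S, G.degree u with hBs
  have h1 : Bsum ≤ (q + 1) + q + t := hdegsum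
  have h2 : A + Bsum = q ^ 2 + 2 * q + 1 := by rw [htotal, hexp]
  have h3 : t + (q + 2) = q ^ 2 + q := hkey
  -- from h3 : t = q^2 - 2, so Bsum ≤ q^2 + 2q - 1, so A ≥ 2
  linarith

/-- If `q` is even and positive and `G` is a `C₄`-free graph on `q² + q` vertices
with maximum degree at most `q + 1`, then `G` has at most `q(q+1)²/2 - q` edges. -/
theorem card_edges_le_of_maxDegree_le (q : ℕ) (hq : 0 < q) (hqe : Even q)
    (G : SimpleGraph (Fin (q ^ 2 + q))) [DecidableRel G.Adj] (hG : C4Free G)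
    (hΔ : ∀ v, G.degree v ≤ q + 1) :
    G.edgeFinset.card ≤ q * (q + 1) ^ 2 / 2 - q := by
  classical
  by_contra hcon
  push_neg at hcon
  obtain ⟨m, hm⟩ := hqe
  have hm1 : 1 ≤ m := by omega
  have hq2 : 2 ≤ q := by omega
  set E := G.edgeFinset.card with hE
  set D := ∑ v : Fin (q ^ 2 + q), (q + 1 - G.degree v) with hD
  have hn : (Finset.univ : Finset (Fin (q ^ 2 + q))).card = q ^ 2 + q := by simp
  -- (1)  D + 2E = (q^2+q)(q+1)
  have h1 : D + 2 * E = (q ^ 2 + q) * (q + 1) := by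
    have hsumdeg : ∑ v : Fin (q ^ 2 + q), G.degree v = 2 * E := by
      rw [hE]; exact G.sum_degrees_eq_twice_card_edges
    have : ∑ v : Fin (q ^ 2 + q), ((q + 1 - G.degree v) + G.degree v)
        = ∑ v : Fin (q ^ 2 + q), (q + 1) :=
      Finset.sum_congr rfl (fun v _ => Nat.sub_add_cancel (hΔ v))
    rw [Finset.sum_add_distrib, hsumdeg, Finset.sum_const, hn, smul_eq_mul] at this
    rw [hD]
    exact this
  -- number of full-degree vertices
  set Full := Finset.univ.filter (fun v : Fin (q ^ 2 + q) => G.degree v = q + 1) with hFull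
  set F := Full.card with hF
  -- (2)  2F ≤ sum over full vertices of neighborhood deficiency
  have h2 : 2 * F ≤ ∑ v ∈ Full, ∑ u ∈ G.neighborFinset v, (q + 1 - G.degree u) := by
    have := Finset.card_nsmul_le_sum Full
      (fun v => ∑ u ∈ G.neighborFinset v, (q + 1 - G.degree u)) 2
      (fun v hv => key_deficiency q hq2 ⟨m, hm⟩ G hG hΔ v (Finset.mem_filter.mp hv).2)
    rwa [smul_eq_mul, mul_comm] at this
  -- (3) swap the double sum
  have h3 : ∑ v : Fin (q ^ 2 + q), ∑ u ∈ G.neighborFinset v, (q + 1 - G.degree u)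
      = ∑ u : Fin (q ^ 2 + q), (q + 1 - G.degree u) * G.degree u := by
    have hnb : ∀ v : Fin (q ^ 2 + q),
        G.neighborFinset v = Finset.univ.filter (G.Adj v) := by
      intro v; ext u; simp
    calc ∑ v : Fin (q ^ 2 + q), ∑ u ∈ G.neighborFinset v, (q + 1 - G.degree u)
        = ∑ v : Fin (q ^ 2 + q), ∑ u : Fin (q ^ 2 + q),
            (if G.Adj v u then (q + 1 - G.degree u) else 0) := by
          apply Finset.sum_congr rfl
          intro v _
          rw [hnb v, Finset.sum_filter]
      _ = ∑ u : Fin (q ^ 2 + q), ∑ v : Fin (q ^ 2 + q),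
            (if G.Adj v u then (q + 1 - G.degree u) else 0) := Finset.sum_comm
      _ = ∑ u : Fin (q ^ 2 + q), (q + 1 - G.degree u) * G.degree u := by
          apply Finset.sum_congr rfl
          intro u _
          rw [← Finset.sum_filter]
          have hfe : Finset.univ.filter (fun v => G.Adj v u) = G.neighborFinset u := by
            ext v; simp [SimpleGraph.adj_comm]
          rw [hfe, Finset.sum_const, smul_eq_mul, G.card_neighborFinset_eq_degree, mul_comm]
  -- (4) pointwise bound
  have h4 : ∑ u : Fin (q ^ 2 + q), (q + 1 - G.degree u) * G.degree u ≤ q * D := by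
    rw [hD, Finset.mul_sum]
    apply Finset.sum_le_sum
    intro u _
    rcases Nat.lt_or_ge (G.degree u) (q + 1) with h | h
    · have : G.degree u ≤ q := by omega
      calc (q + 1 - G.degree u) * G.degree u ≤ (q + 1 - G.degree u) * q :=
            Nat.mul_le_mul_left _ this
        _ = q * (q + 1 - G.degree u) := mul_comm _ _
    · have : q + 1 - G.degree u = 0 := by omega
      rw [this]; simp
  -- (5)  n ≤ F + D
  have h5 : q ^ 2 + q ≤ F + D := by
    have hsplit := Finset.card_filter_add_card_filter_not
      (s := (Finset.univ : Finset (Fin (q ^ 2 + q))))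
      (p := fun v => G.degree v = q + 1)
    rw [hn] at hsplit
    have hFd : (Finset.univ.filter (fun v : Fin (q ^ 2 + q) => G.degree v = q + 1)).card
        = F := rfl
    have hdefle : (Finset.univ.filter (fun v : Fin (q ^ 2 + q) => ¬(G.degree v = q + 1))).card
        ≤ D := by
      have hone := Finset.card_nsmul_le_sum
        (Finset.univ.filter (fun v : Fin (q ^ 2 + q) => ¬(G.degree v = q + 1)))
        (fun v => q + 1 - G.degree v) 1
        (fun v hv => by
          have h1 : ¬(G.degree v = q + 1) := (Finset.mem_filter.mp hv).2
          have h2 : G.degree v ≤ q + 1 := hΔ v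
          show 1 ≤ q + 1 - G.degree v
          omega)
      rw [smul_eq_mul, mul_one] at hone
      calc (Finset.univ.filter (fun v : Fin (q ^ 2 + q) => ¬(G.degree v = q + 1))).card
          ≤ ∑ v ∈ Finset.univ.filter (fun v : Fin (q ^ 2 + q) => ¬(G.degree v = q + 1)),
              (q + 1 - G.degree v) := hone
        _ ≤ D := by
            rw [hD]
            exact Finset.sum_le_sum_of_subset (Finset.filter_subset _ _)
    omega
  -- combine (2),(3),(4): 2F ≤ qD
  have h6 : 2 * F ≤ q * D := by
    calc 2 * F ≤ ∑ v ∈ Full, ∑ u ∈ G.neighborFinset v, (q + 1 - G.degree u) := h2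
      _ ≤ ∑ v : Fin (q ^ 2 + q), ∑ u ∈ G.neighborFinset v, (q + 1 - G.degree u) :=
          Finset.sum_le_sum_of_subset (Finset.filter_subset _ _)
      _ = ∑ u : Fin (q ^ 2 + q), (q + 1 - G.degree u) * G.degree u := h3
      _ ≤ q * D := h4
  -- final arithmetic
  have hdiv : q * (q + 1) ^ 2 / 2 = m * (q + 1) ^ 2 := by
    have hqq : q * (q + 1) ^ 2 = 2 * (m * (q + 1) ^ 2) := by
      rw [hm]; ring
    rw [hqq]
    exact Nat.mul_div_cancel_left _ (by norm_num)
  rw [hdiv] at hcon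
  have hble : q ≤ m * (q + 1) ^ 2 := by
    calc q = m * 2 := by omega
      _ ≤ m * (q + 1) ^ 2 := by
          apply Nat.mul_le_mul_left
          nlinarith
  have h7 : m * (q + 1) ^ 2 < E + q := by
    have := (tsub_lt_iff_right hble).mp hcon
    omega
  have h8 : 2 * (m * (q + 1) ^ 2) = (q ^ 2 + q) * (q + 1) := by rw [hm]; ring
  -- D ≤ 2q - 2
  have h9 : D + 2 ≤ 2 * q := by linarith
  -- 2(q^2+q) ≤ (q+2) D
  have hexp1 : (q + 2) * D = q * D + 2 * D := by ring
  have h10 : 2 * (q ^ 2 + q) ≤ (q + 2) * D := by linarith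
  have h11 : (q + 2) * (D + 2) ≤ (q + 2) * (2 * q) := Nat.mul_le_mul_left _ h9
  have hexp2 : (q + 2) * (D + 2) = (q + 2) * D + 2 * q + 4 := by ring
  have hexp3 : (q + 2) * (2 * q) = 2 * q ^ 2 + 4 * q := by ring
  have hexp4 : 2 * (q ^ 2 + q) = 2 * q ^ 2 + 2 * q := by ring
  linarith
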